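/- With the hypotheses of the previous statement, the leading term satisfies: e^{−π/h} h^{−(1+2α)} · ∫_{−1}^{1} |φ_w(s)|² e^{π|s|/h} ds → 2 A² Γ(2α+1)/π^{1+2α} as h → 0. -/

import Mathlib

open Real MeasureTheory Filter Asymptotics Set

lemma laplace_dct (ψ : ℝ → ℝ) (C p K : ℝ) (hp : 0 < p)
    (hcont : Continuous ψ) (hnn : ∀ t, 0 ≤ ψ t)
    (hK : ∀ t ∈ Set.Ioc (0:ℝ) 1, ψ t ≤ K * t ^ p)
    (hlim : Tendsto (fun t => ψ t / t ^ p) (nhdsWithin 0 (Set.Ioi 0)) (nhds C)) :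
    Tendsto (fun h : ℝ => ∫ u in Set.Ioi (0:ℝ),
        Set.indicator (Set.Ioc 0 (1/h)) (fun u => ψ (h*u) / h ^ p * Real.exp (-(π * u))) u)
      (nhdsWithin 0 (Set.Ioi 0)) (nhds (C * ((1/π) ^ (p+1) * Real.Gamma (p+1)))) := by
  have hπ : (0:ℝ) < π := Real.pi_pos
  have hint : IntegrableOn (fun u : ℝ => u ^ p * Real.exp (-(π * u))) (Set.Ioi 0) := by
    have := integrableOn_rpow_mul_exp_neg_mul_rpow (s := p) (p := 1) (b := π)
      (by linarith) one_pos hπ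
    refine this.congr_fun (fun x hx => ?_) measurableSet_Ioi
    beta_reduce
    rw [Real.rpow_one, neg_mul]
  have hval : ∫ u in Set.Ioi (0:ℝ), C * (u ^ p * Real.exp (-(π * u)))
      = C * ((1/π) ^ (p+1) * Real.Gamma (p+1)) := by
    rw [MeasureTheory.integral_const_mul, ← Real.integral_rpow_mul_exp_neg_mul_Ioi
      (by linarith : (0:ℝ) < p + 1) hπ]
    congr 1
    refine setIntegral_congr_fun measurableSet_Ioi (fun x hx => ?_)
    rw [add_sub_cancel_right]
  rw [← hval]
  refine tendsto_integral_filter_of_dominated_convergence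
    (fun u => (max K 0) * (u ^ p * Real.exp (-(π * u)))) ?_ ?_ ?_ ?_
  · filter_upwards [self_mem_nhdsWithin] with h hh
    exact ((((hcont.comp (continuous_const.mul continuous_id)).div_const _).mul
      (Real.continuous_exp.comp (continuous_const.mul continuous_id).neg)).aestronglyMeasurable).indicator
      measurableSet_Ioc
  · filter_upwards [self_mem_nhdsWithin] with h (hh : 0 < h)
    filter_upwards [ae_restrict_mem measurableSet_Ioi] with u (hu : 0 < u)
    by_cases hmem : u ∈ Set.Ioc (0:ℝ) (1/h)
    · rw [Set.indicator_of_mem hmem]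
      have hhu : h * u ∈ Set.Ioc (0:ℝ) 1 := by
        constructor
        · positivity
        · calc h * u ≤ h * (1/h) := mul_le_mul_of_nonneg_left hmem.2 hh.le
            _ = 1 := by field_simp
      have h1 : ψ (h*u) ≤ K * (h*u) ^ p := hK _ hhu
      have h2 : (h*u) ^ p = h ^ p * u ^ p := Real.mul_rpow hh.le hu.le
      have hhp : (0:ℝ) < h ^ p := Real.rpow_pos_of_pos hh p
      rw [Real.norm_eq_abs, abs_of_nonneg (by
        have := hnn (h*u)
        positivity)]
      have hle : ψ (h*u) / h ^ p ≤ K * u ^ p := by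
        rw [div_le_iff₀ hhp]
        calc ψ (h*u) ≤ K * (h ^ p * u ^ p) := by rw [← h2]; exact h1
          _ = K * u ^ p * h ^ p := by ring
      calc ψ (h*u) / h ^ p * Real.exp (-(π * u))
          ≤ K * u ^ p * Real.exp (-(π * u)) :=
            mul_le_mul_of_nonneg_right hle (Real.exp_nonneg _)
        _ ≤ (max K 0) * u ^ p * Real.exp (-(π * u)) := by
            have hup : (0:ℝ) ≤ u ^ p := Real.rpow_nonneg hu.le p
            exact mul_le_mul_of_nonneg_right
              (mul_le_mul_of_nonneg_right (le_max_left _ _) hup) (Real.exp_nonneg _)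
        _ = (max K 0) * (u ^ p * Real.exp (-(π * u))) := by ring
    · rw [Set.indicator_of_notMem hmem]
      simp only [norm_zero]
      have hup : (0:ℝ) ≤ u ^ p := Real.rpow_nonneg hu.le p
      positivity
  · exact hint.const_mul _
  · filter_upwards [ae_restrict_mem measurableSet_Ioi] with u (hu : 0 < u)
    have hmem : ∀ᶠ h in nhdsWithin 0 (Set.Ioi 0), h ∈ Set.Ioo (0:ℝ) (1/u) := by
      apply Ioo_mem_nhdsGT_of_mem
      exact ⟨le_rfl, by positivity⟩
    have htend : Tendsto (fun h : ℝ => h * u) (nhdsWithin 0 (Set.Ioi 0))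
        (nhdsWithin 0 (Set.Ioi 0)) := by
      rw [tendsto_nhdsWithin_iff]
      constructor
      · have : Tendsto (fun h : ℝ => h * u) (nhdsWithin 0 (Set.Ioi 0)) (nhds (0 * u)) :=
          (tendsto_id.mono_left nhdsWithin_le_nhds).mul_const u
        simpa using this
      · filter_upwards [self_mem_nhdsWithin] with h (hh : 0 < h)
        exact mul_pos hh hu
    have hcomp : Tendsto (fun h : ℝ => ψ (h*u) / (h*u) ^ p) (nhdsWithin 0 (Set.Ioi 0))
        (nhds C) := hlim.comp htend
    have hmul : Tendsto (fun h : ℝ => ψ (h*u) / (h*u) ^ p * (u ^ p * Real.exp (-(π * u))))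
        (nhdsWithin 0 (Set.Ioi 0)) (nhds (C * (u ^ p * Real.exp (-(π * u))))) :=
      hcomp.mul_const _
    refine Tendsto.congr' ?_ hmul
    filter_upwards [hmem, self_mem_nhdsWithin] with h hh (hh0 : 0 < h)
    have humem : u ∈ Set.Ioc (0:ℝ) (1/h) := by
      refine ⟨hu, ?_⟩
      rw [le_one_div hu hh0]
      exact hh.2.le
    rw [Set.indicator_of_mem humem]
    have h2 : (h*u) ^ p = h ^ p * u ^ p := Real.mul_rpow hh0.le hu.le
    have hhp : (h:ℝ) ^ p ≠ 0 := (Real.rpow_pos_of_pos hh0 p).ne'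
    have hup : (u:ℝ) ^ p ≠ 0 := (Real.rpow_pos_of_pos hu p).ne'
    rw [h2]
    field_simp

lemma ratio_limit (φw : ℝ → ℂ) (A α : ℝ)
    (hw_exp : (fun t : ℝ => φw (1 - t) - (A : ℂ) * (t : ℂ) ^ (α : ℂ))
        =o[nhdsWithin 0 (Set.Ioi 0)] (fun t : ℝ => t ^ α)) :
    Tendsto (fun t : ℝ => ‖φw (1 - t)‖ / t ^ α)
      (nhdsWithin 0 (Set.Ioi 0)) (nhds |A|) := by
  have h0 : Tendsto (fun t : ℝ =>
      ‖φw (1 - t) - (A : ℂ) * (t : ℂ) ^ (α : ℂ)‖ / t ^ α)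
      (nhdsWithin 0 (Set.Ioi 0)) (nhds 0) := by
    have h1 := hw_exp.norm_norm.tendsto_div_nhds_zero
    refine Tendsto.congr' ?_ h1
    filter_upwards [self_mem_nhdsWithin] with t (ht : 0 < t)
    have htp : (0:ℝ) < t ^ α := Real.rpow_pos_of_pos ht α
    simp [abs_of_pos htp]
  have key : Tendsto (fun t : ℝ => ‖φw (1 - t)‖ / t ^ α - |A|)
      (nhdsWithin 0 (Set.Ioi 0)) (nhds 0) := by
    refine squeeze_zero_norm' ?_ h0
    filter_upwards [self_mem_nhdsWithin] with t (ht : 0 < t)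
    have htp : (0:ℝ) < t ^ α := Real.rpow_pos_of_pos ht α
    have habs : ‖(A : ℂ) * (t : ℂ) ^ (α : ℂ)‖ = |A| * t ^ α := by
      rw [norm_mul, Complex.norm_real, Complex.norm_cpow_eq_rpow_re_of_pos ht]
      norm_num
    have tri : |‖φw (1 - t)‖ - |A| * t ^ α|
        ≤ ‖φw (1 - t) - (A : ℂ) * (t : ℂ) ^ (α : ℂ)‖ := by
      rw [← habs]
      exact abs_norm_sub_norm_le _ _
    rw [Real.norm_eq_abs]
    have heq : ‖φw (1 - t)‖ / t ^ α - |A|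
        = (‖φw (1 - t)‖ - |A| * t ^ α) / t ^ α := by
      field_simp
    rw [heq, abs_div, abs_of_pos htp]
    exact div_le_div_of_nonneg_right tri htp.le |>.trans_eq rfl
  have := key.add (tendsto_const_nhds (x := |A|))
  simpa using this

/-- Leading-term limit:
`e^{−π/h} h^{−(1+2α)} ∫_{−1}^{1} |φ_w(s)|² e^{π|s|/h} ds → 2A²Γ(2α+1)/π^{1+2α}` as `h → 0`. -/
theorem vh_leading_term_limit
    (φw : ℝ → ℂ) (A α : ℝ) (hα : 0 < α)
    (hw_cont : Continuous φw)
    (hw_supp : ∀ s : ℝ, 1 < |s| → φw s = 0)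
    (hw_sym : ∀ s : ℝ, ‖φw (-s)‖ = ‖φw s‖)
    (hw_exp : (fun t : ℝ => φw (1 - t) - (A : ℂ) * (t : ℂ) ^ (α : ℂ))
        =o[nhdsWithin 0 (Set.Ioi 0)] (fun t : ℝ => t ^ α)) :
    Tendsto
      (fun h : ℝ => Real.exp (-π / h) * h ^ (-(1 + 2 * α)) *
        ∫ s in Set.Icc (-1 : ℝ) 1, ‖φw s‖ ^ 2 * Real.exp (π * |s| / h))
      (nhdsWithin 0 (Set.Ioi (0 : ℝ)))
      (nhds (2 * A ^ 2 * Real.Gamma (2 * α + 1) / π ^ (1 + 2 * α))) := by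
  have hπ : (0:ℝ) < π := Real.pi_pos
  set ρ : ℝ → ℝ := fun t => ‖φw (1 - t)‖ with hρdef
  set ψ : ℝ → ℝ := fun t => ρ t ^ 2 with hψdef
  have hρcont : Continuous ρ :=
    continuous_norm.comp (hw_cont.comp (continuous_const.sub continuous_id))
  have hψcont : Continuous ψ := hρcont.pow 2
  have hρnn : ∀ t, 0 ≤ ρ t := fun t => norm_nonneg _
  have hρlim : Tendsto (fun t : ℝ => ρ t / t ^ α) (nhdsWithin 0 (Set.Ioi 0)) (nhds |A|) :=
    ratio_limit φw A α hw_exp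
  -- squared ratio limit
  have hψlim : Tendsto (fun t : ℝ => ψ t / t ^ (2*α)) (nhdsWithin 0 (Set.Ioi 0))
      (nhds (A^2)) := by
    have h1 := hρlim.mul hρlim
    rw [abs_mul_abs_self, ← sq] at h1
    refine Tendsto.congr' ?_ h1
    filter_upwards [self_mem_nhdsWithin] with t (ht : 0 < t)
    have h2 : t ^ (2*α) = t ^ α * t ^ α := by
      rw [two_mul, Real.rpow_add ht]
    rw [hψdef]
    simp only
    rw [h2, sq, div_mul_div_comm]
  -- global bound  ρ t ≤ K t^α on (0,1]
  obtain ⟨δ, hδpos, hδ⟩ : ∃ δ > 0, ∀ t : ℝ, t ∈ Set.Ioo (0:ℝ) δ → ρ t / t ^ α < |A| + 1 := by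
    have hev : ∀ᶠ t in nhdsWithin 0 (Set.Ioi 0), ρ t / t ^ α < |A| + 1 :=
      hρlim.eventually_lt_const (by linarith [abs_nonneg A])
    rw [eventually_nhdsWithin_iff, Metric.eventually_nhds_iff] at hev
    obtain ⟨ε, hε, hball⟩ := hev
    exact ⟨ε, hε, fun t ht => hball (by
      rw [Real.dist_eq, sub_zero, abs_of_pos ht.1]; exact ht.2) ht.1⟩
  obtain ⟨M, hM⟩ : ∃ M, ∀ t ∈ Set.Icc (0:ℝ) 1, ρ t ≤ M := by
    obtain ⟨M, hM⟩ := (isCompact_Icc (a := (0:ℝ)) (b := 1)).exists_bound_of_continuousOn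
      hρcont.continuousOn
    exact ⟨M, fun t ht => le_trans (le_abs_self _) (by simpa using hM t ht)⟩
  have hM0 : 0 ≤ M := (hρnn 0).trans (hM 0 (by norm_num))
  set δ₁ : ℝ := min δ 1 with hδ₁def
  have hδ₁pos : 0 < δ₁ := lt_min hδpos one_pos
  have hδ₁le1 : δ₁ ≤ 1 := min_le_right _ _
  set K : ℝ := max (|A| + 1) (M / δ₁ ^ α) with hKdef
  have hρbound : ∀ t ∈ Set.Ioc (0:ℝ) 1, ρ t ≤ K * t ^ α := by
    intro t ht
    have htp : (0:ℝ) < t ^ α := Real.rpow_pos_of_pos ht.1 α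
    by_cases hcase : t < δ
    · have := hδ t ⟨ht.1, hcase⟩
      have h1 : ρ t ≤ (|A| + 1) * t ^ α := by
        rw [div_lt_iff₀ htp] at this
        linarith
      calc ρ t ≤ (|A| + 1) * t ^ α := h1
        _ ≤ K * t ^ α := mul_le_mul_of_nonneg_right (le_max_left _ _) htp.le
    · push_neg at hcase
      have ht1 : δ₁ ≤ t := le_trans (min_le_left _ _ |>.trans hcase) le_rfl
      have hδ₁t : δ₁ ^ α ≤ t ^ α := Real.rpow_le_rpow hδ₁pos.le ht1 hα.le
      have hδ₁p : (0:ℝ) < δ₁ ^ α := Real.rpow_pos_of_pos hδ₁pos α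
      calc ρ t ≤ M := hM t ⟨ht.1.le, ht.2⟩
        _ = (M / δ₁ ^ α) * δ₁ ^ α := by field_simp
        _ ≤ (M / δ₁ ^ α) * t ^ α :=
            mul_le_mul_of_nonneg_left hδ₁t (by positivity)
        _ ≤ K * t ^ α := mul_le_mul_of_nonneg_right (le_max_right _ _) htp.le
  have hψbound : ∀ t ∈ Set.Ioc (0:ℝ) 1, ψ t ≤ K^2 * t ^ (2*α) := by
    intro t ht
    have htp : (0:ℝ) < t ^ α := Real.rpow_pos_of_pos ht.1 α
    have h2 : t ^ (2*α) = t ^ α * t ^ α := by rw [two_mul, Real.rpow_add ht.1]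
    have h1 := hρbound t ht
    have := mul_self_le_mul_self (hρnn t) h1
    calc ψ t = ρ t * ρ t := pow_two (ρ t)
      _ ≤ (K * t ^ α) * (K * t ^ α) := this
      _ = K^2 * t ^ (2*α) := by rw [h2]; ring
  -- apply the DCT lemma
  have key := laplace_dct ψ (A^2) (2*α) (K^2) (by linarith) hψcont
    (fun t => sq_nonneg _) hψbound hψlim
  have main := key.const_mul (2:ℝ)
  -- identify the constant
  have hconst : (2:ℝ) * (A^2 * ((1/π) ^ (2*α+1) * Real.Gamma (2*α+1)))
      = 2 * A ^ 2 * Real.Gamma (2 * α + 1) / π ^ (1 + 2 * α) := by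
    have h1 : (1/π) ^ (2*α+1) = (π ^ (2*α+1))⁻¹ := by
      rw [one_div, Real.inv_rpow hπ.le]
    have h2 : π ^ (1+2*α) = π ^ (2*α+1) := by rw [add_comm]
    rw [h1, h2]
    have h3 : π ^ (2*α+1) ≠ 0 := (Real.rpow_pos_of_pos hπ _).ne'
    field_simp
  rw [hconst] at main
  refine Tendsto.congr' ?_ main
  filter_upwards [self_mem_nhdsWithin] with h (hh : 0 < h)
  have hne : h ≠ 0 := hh.ne'
  -- notation
  set f : ℝ → ℝ := fun s => ‖φw s‖ ^ 2 * Real.exp (π * |s| / h) with hfdef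
  have hfcont : Continuous f := by
    apply Continuous.mul
    · exact (continuous_norm.comp hw_cont).pow 2
    · exact Real.continuous_exp.comp ((continuous_const.mul continuous_abs).div_const h)
  have hfint : ∀ a b : ℝ, IntervalIntegrable f volume a b :=
    fun a b => hfcont.intervalIntegrable a b
  -- Step 1: Icc to interval integral
  have step1 : ∫ s in Set.Icc (-1:ℝ) 1, f s = ∫ s in (-1:ℝ)..1, f s := by
    rw [MeasureTheory.integral_Icc_eq_integral_Ioc,
      intervalIntegral.integral_of_le (by norm_num : (-1:ℝ) ≤ 1)]
  -- Step 2-3: symmetry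
  have hfeven : ∀ x : ℝ, f (-x) = f x := by
    intro x
    simp only [hfdef, hw_sym, abs_neg]
  have step2 : ∫ s in (-1:ℝ)..1, f s = 2 * ∫ s in (0:ℝ)..1, f s := by
    rw [← intervalIntegral.integral_add_adjacent_intervals (hfint (-1) 0) (hfint 0 1)]
    have h3 : ∫ s in (0:ℝ)..1, f (-s) = ∫ s in (-1:ℝ)..(-0:ℝ), f s :=
      intervalIntegral.integral_comp_neg f
    simp only [hfeven, neg_zero] at h3
    rw [← h3]
    ring
  -- Step 4: drop |s|
  have step4 : ∫ s in (0:ℝ)..1, f s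
      = ∫ s in (0:ℝ)..1, ‖φw s‖ ^ 2 * Real.exp (π * s / h) := by
    apply intervalIntegral.integral_congr
    intro s hs
    rw [Set.uIcc_of_le (by norm_num : (0:ℝ) ≤ 1)] at hs
    simp only [hfdef]
    rw [abs_of_nonneg hs.1]
  -- Step 5: s = 1 - t and factor out exp(π/h)
  have step5 : ∫ s in (0:ℝ)..1, ‖φw s‖ ^ 2 * Real.exp (π * s / h)
      = Real.exp (π/h) * ∫ t in (0:ℝ)..1, ψ t * Real.exp (-(π * t / h)) := by
    have hsub := intervalIntegral.integral_comp_sub_left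
      (fun s => ‖φw s‖ ^ 2 * Real.exp (π * s / h)) 1 (a := 0) (b := 1)
    simp only [sub_zero, sub_self] at hsub
    rw [← hsub]
    rw [← intervalIntegral.integral_const_mul]
    apply intervalIntegral.integral_congr
    intro t ht
    simp only [hψdef, hρdef]
    rw [show π * (1 - t) / h = π / h + -(π * t / h) by ring, Real.exp_add]
    ring
  -- Step 6: t = h u
  have step6 : ∫ t in (0:ℝ)..1, ψ t * Real.exp (-(π * t / h))
      = h * ∫ u in (0:ℝ)..(1/h), ψ (h*u) * Real.exp (-(π * u)) := by
    have hsub := intervalIntegral.integral_comp_mul_left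
      (fun t => ψ t * Real.exp (-(π * t / h))) (a := 0) (b := 1/h) hne
    simp only [mul_zero] at hsub
    have h1h : h * (1/h) = 1 := by field_simp
    rw [h1h] at hsub
    have heq : (fun u => ψ (h*u) * Real.exp (-(π * (h*u) / h)))
        = fun u => ψ (h*u) * Real.exp (-(π * u)) := by
      funext u
      congr 2
      field_simp
    rw [heq] at hsub
    rw [hsub, smul_eq_mul, ← mul_assoc]
    field_simp
  -- Step 7: relate to the indicator integral
  have step7 : ∫ u in Set.Ioi (0:ℝ),
      Set.indicator (Set.Ioc 0 (1/h)) (fun u => ψ (h*u) / h ^ (2*α) * Real.exp (-(π * u))) u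
      = (h ^ (2*α))⁻¹ * ∫ u in (0:ℝ)..(1/h), ψ (h*u) * Real.exp (-(π * u)) := by
    rw [MeasureTheory.setIntegral_indicator measurableSet_Ioc]
    have hinter : Set.Ioi (0:ℝ) ∩ Set.Ioc 0 (1/h) = Set.Ioc 0 (1/h) :=
      Set.inter_eq_self_of_subset_right Set.Ioc_subset_Ioi_self
    rw [hinter, ← intervalIntegral.integral_of_le (by positivity : (0:ℝ) ≤ 1/h)]
    rw [← intervalIntegral.integral_const_mul]
    apply intervalIntegral.integral_congr
    intro u hu
    field_simp
  -- now pure algebra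
  rw [step1, step2, step4, step5, step6, step7]
  have hrw : Real.exp (-π/h) * Real.exp (π/h) = 1 := by
    rw [← Real.exp_add]; simp [neg_div]
  have hpow : h ^ (-(1+2*α)) * h = (h ^ (2*α))⁻¹ := by
    nth_rewrite 2 [← Real.rpow_one h]
    rw [← Real.rpow_add hh, ← Real.rpow_neg hh.le]
    norm_num
  have hexp : Real.exp (-π/h) = (Real.exp (π/h))⁻¹ := by
    rw [← Real.exp_neg]; congr 1; ring
  set Y : ℝ := ∫ u in (0:ℝ)..(1/h), ψ (h*u) * Real.exp (-(π * u)) with hYdef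
  have hepos : Real.exp (π/h) ≠ 0 := (Real.exp_pos _).ne'
  have hhp : h ^ (2*α) ≠ 0 := (Real.rpow_pos_of_pos hh _).ne'
  symm
  calc Real.exp (-π / h) * h ^ (-(1 + 2 * α)) * (2 * (Real.exp (π/h) * (h * Y)))
      = (Real.exp (-π/h) * Real.exp (π/h)) * (h ^ (-(1+2*α)) * h) * (2 * Y) := by ring
    _ = 2 * ((h ^ (2*α))⁻¹ * Y) := by rw [hrw, hpow]; ring
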